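/- Let $\mathcal{K}_0$ be a set of finite nonempty subsets of $\mathbb{Z}^n$ equipped with a commutative, associative binary operation $\tilde{+}$ under which $\mathcal{K}_0$ is closed, and assume: (1) if $A \in \mathcal{K}_0$ then $\Delta(A) \cap \mathbb{Z}^n \in \mathcal{K}_0$; (2) for all $A, B \in \mathcal{K}_0$, $A + B \subseteq A \,\tilde{+}\, B$ (where $+$ is Minkowski sum); (3) for all $A, B \in \mathcal{K}_0$, $\Delta(A \,\tilde{+}\, B) = \Delta(A + B)$. Then for $A, B \in \mathcal{K}_0$, there exists $C \in \mathcal{K}_0$ with $A \,\tilde{+}\, C = B \,\tilde{+}\, C$ if and only if $\Delta(A) = \Delta(B)$. -/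

import Mathlib

open Pointwise Filter

/-- The embedding of the lattice `ℤⁿ` into `ℝⁿ`. -/
def latticeEmb (n : ℕ) : (Fin n → ℤ) → (Fin n → ℝ) := fun k i => (k i : ℝ)

/-- The Newton polytope of a finite set `A ⊆ ℤⁿ`: the convex hull of `A` in `ℝⁿ`. -/
def newtonPolytope (n : ℕ) (A : Finset (Fin n → ℤ)) : Set (Fin n → ℝ) :=
  convexHull ℝ (latticeEmb n '' ↑A)

/-- `latticeEmb` as an additive monoid homomorphism. -/
def latticeHom (n : ℕ) : (Fin n → ℤ) →+ (Fin n → ℝ) where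
  toFun := latticeEmb n
  map_zero' := by funext i; simp [latticeEmb]
  map_add' x y := by funext i; simp [latticeEmb]

lemma latticeEmb_sub (n : ℕ) (x y : Fin n → ℤ) :
    latticeEmb n (x - y) = latticeEmb n x - latticeEmb n y := by
  funext i; simp [latticeEmb]

lemma np_add (n : ℕ) (X Y : Finset (Fin n → ℤ)) :
    newtonPolytope n (X + Y) = newtonPolytope n X + newtonPolytope n Y := by
  unfold newtonPolytope
  rw [Finset.coe_add, show latticeEmb n '' (↑X + ↑Y) =
    latticeEmb n '' ↑X + latticeEmb n '' ↑Y from Set.image_add (latticeHom n), convexHull_add]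

lemma np_convex (n : ℕ) (X : Finset (Fin n → ℤ)) : Convex ℝ (newtonPolytope n X) :=
  convex_convexHull ℝ _

lemma np_compact (n : ℕ) (X : Finset (Fin n → ℤ)) : IsCompact (newtonPolytope n X) :=
  (X.finite_toSet.image _).isCompact_convexHull ℝ

lemma mem_np_of_mem (n : ℕ) (X : Finset (Fin n → ℤ)) {x} (hx : x ∈ X) :
    latticeEmb n x ∈ newtonPolytope n X :=
  subset_convexHull ℝ _ ⟨x, hx, rfl⟩

lemma exists_latticeFinset (n : ℕ) (X : Finset (Fin n → ℤ)) :
    ∃ X' : Finset (Fin n → ℤ),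
      (↑X' : Set (Fin n → ℤ)) = {k | latticeEmb n k ∈ newtonPolytope n X} := by
  obtain ⟨R, hR⟩ := (isBounded_iff_forall_norm_le).mp (np_compact n X).isBounded
  have hfin : {k : Fin n → ℤ | latticeEmb n k ∈ newtonPolytope n X}.Finite := by
    apply Set.Finite.subset (Finset.Icc (fun _ => (-⌈R⌉ : ℤ)) (fun _ => ⌈R⌉)).finite_toSet
    intro k hk
    simp only [Finset.coe_Icc, Set.mem_Icc, Pi.le_def]
    have h1 : ∀ i, |(k i : ℝ)| ≤ R := fun i =>
      le_trans (norm_le_pi_norm (latticeEmb n k) i) (hR _ hk)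
    constructor
    · intro i
      have h2 := (abs_le.mp (h1 i)).1
      have : -(⌈R⌉ : ℝ) ≤ (k i : ℝ) := le_trans (neg_le_neg (Int.le_ceil R)) h2
      exact_mod_cast this
    · intro i
      have : (k i : ℝ) ≤ (⌈R⌉ : ℝ) := le_trans (abs_le.mp (h1 i)).2 (Int.le_ceil R)
      exact_mod_cast this
  exact ⟨hfin.toFinset, hfin.coe_toFinset⟩

lemma np_latt (n : ℕ) (X X' : Finset (Fin n → ℤ))
    (h : (↑X' : Set (Fin n → ℤ)) = {k | latticeEmb n k ∈ newtonPolytope n X}) :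
    newtonPolytope n X' = newtonPolytope n X := by
  apply subset_antisymm
  · apply convexHull_min _ (np_convex n X)
    rintro _ ⟨k, hk, rfl⟩
    have : k ∈ (↑X' : Set (Fin n → ℤ)) := hk
    rw [h] at this
    exact this
  · apply convexHull_mono
    apply Set.image_mono
    intro x hx
    have : latticeEmb n x ∈ newtonPolytope n X := mem_np_of_mem n X hx
    exact (Set.ext_iff.mp h x).mpr this

lemma subset_of_add_subset {E : Type*} [NormedAddCommGroup E] [NormedSpace ℝ E]
    {K L M : Set E} (hL : Convex ℝ L) (hLc : IsClosed L) (hM : M.Nonempty)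
    (hMb : ∃ R, ∀ x ∈ M, ‖x‖ ≤ R) (h : K + M ⊆ L + M) : K ⊆ L := by
  obtain ⟨m₀, hm₀⟩ := hM
  obtain ⟨R, hR⟩ := hMb
  intro k hk
  have step : ∀ m : {m // m ∈ M}, ∃ p : {l // l ∈ L} × {m' // m' ∈ M},
      k + m.1 = p.1.1 + p.2.1 := by
    rintro ⟨m, hm⟩
    obtain ⟨l, hl, m', hm', he⟩ := h (Set.add_mem_add hk hm)
    exact ⟨⟨⟨l, hl⟩, ⟨m', hm'⟩⟩, he.symm⟩
  choose F hF using step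
  set ms : ℕ → {m // m ∈ M} := fun j => Nat.rec ⟨m₀, hm₀⟩ (fun _ s => (F s).2) j with hms
  set ls : ℕ → E := fun j => ((F (ms j)).1 : E) with hls
  have hls_mem : ∀ j, ls j ∈ L := fun j => (F (ms j)).1.2
  have hrec : ∀ j, k + (ms j).1 = ls j + (ms (j+1)).1 := fun j => hF (ms j)
  have key : ∀ j, j • k + m₀ = (∑ i ∈ Finset.range j, ls i) + (ms j).1 := by
    intro j
    induction j with
    | zero => simp [hms]
    | succ j ih =>
      rw [succ_nsmul, Finset.sum_range_succ]
      have h5 : j • k + m₀ + k = (∑ i ∈ Finset.range j, ls i) + (ms j).1 + k := by rw [ih]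
      rw [show j • k + k + m₀ = j • k + m₀ + k by abel, h5,
        show (∑ i ∈ Finset.range j, ls i) + (ms j).1 + k
          = (∑ i ∈ Finset.range j, ls i) + (k + (ms j).1) by abel, hrec j]
      abel
  set c : ℕ → E := fun j => (j : ℝ)⁻¹ • ∑ i ∈ Finset.range j, ls i with hc
  have hcL : ∀ j : ℕ, 1 ≤ j → c j ∈ L := by
    intro j hj
    have hj0 : (j : ℝ) ≠ 0 := Nat.cast_ne_zero.mpr (by omega)
    rw [hc]
    simp only [Finset.smul_sum]
    apply hL.sum_mem (fun i _ => by positivity)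
    · rw [Finset.sum_const, Finset.card_range, nsmul_eq_mul, mul_inv_cancel₀ hj0]
    · exact fun i _ => hls_mem i
  have hkc : ∀ j : ℕ, 1 ≤ j → k - c j = (j : ℝ)⁻¹ • ((ms j).1 - m₀) := by
    intro j hj
    have hj0 : (j : ℝ) ≠ 0 := Nat.cast_ne_zero.mpr (by omega)
    have hsum : (∑ i ∈ Finset.range j, ls i) = j • k + m₀ - (ms j).1 := by
      rw [key j]; abel
    show k - (j : ℝ)⁻¹ • ∑ i ∈ Finset.range j, ls i = _
    rw [hsum, smul_sub, smul_add, ← Nat.cast_smul_eq_nsmul ℝ j k, smul_smul,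
      inv_mul_cancel₀ hj0, one_smul]
    rw [smul_sub]
    abel
  have hd : Tendsto (fun j : ℕ => k - c j) atTop (nhds 0) := by
    apply squeeze_zero_norm' (a := fun j : ℕ => (R + R) / j)
    · filter_upwards [eventually_ge_atTop 1] with j hj
      rw [hkc j hj, norm_smul, norm_inv, Real.norm_natCast, div_eq_inv_mul]
      gcongr
      calc ‖(ms j).1 - m₀‖ ≤ ‖(ms j).1‖ + ‖m₀‖ := norm_sub_le _ _
        _ ≤ R + R := add_le_add (hR _ (ms j).2) (hR _ hm₀)
    · exact tendsto_const_div_atTop_nhds_zero_nat _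
  have hct : Tendsto c atTop (nhds k) := by
    have := tendsto_const_nhds (x := k) (f := atTop (α := ℕ)) |>.sub hd
    simpa using this
  exact hLc.mem_of_tendsto hct
    (by filter_upwards [eventually_ge_atTop 1] with j hj using hcL j hj)

lemma key_step (n : ℕ) (A : Finset (Fin n → ℤ)) (m : ℕ) (hm : A.card ≤ m + 1)
    {z : Fin n → ℤ} (hz : latticeEmb n z ∈ ((m : ℝ) + 2) • newtonPolytope n A) :
    ∃ a ∈ A, latticeEmb n (z - a) ∈ ((m : ℝ) + 1) • newtonPolytope n A := by
  classical
  set t : Finset (Fin n → ℝ) := A.image (latticeEmb n) with ht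
  have hm2 : ((m : ℝ) + 2) ≠ 0 := by positivity
  have hm1 : ((m : ℝ) + 1) ≠ 0 := by positivity
  have hΔ : newtonPolytope n A = convexHull ℝ ↑t := by
    rw [ht, Finset.coe_image, newtonPolytope]
  rw [hΔ] at hz ⊢
  rw [Set.mem_smul_set_iff_inv_smul_mem₀ hm2] at hz
  rw [Finset.convexHull_eq] at hz
  obtain ⟨w, hw0, hw1, hwc⟩ := hz
  rw [Finset.centerMass_eq_of_sum_1 _ _ hw1] at hwc
  simp only [id_eq] at hwc
  set w' : (Fin n → ℝ) → ℝ := fun y => ((m : ℝ) + 2) * w y with hw'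
  have hw'0 : ∀ y ∈ t, 0 ≤ w' y := fun y hy => by
    have := hw0 y hy; positivity
  have hw'sum : ∑ y ∈ t, w' y = (m : ℝ) + 2 := by
    rw [hw', ← Finset.mul_sum, hw1, mul_one]
  have hw'c : ∑ y ∈ t, w' y • y = latticeEmb n z := by
    simp only [hw', mul_smul, ← Finset.smul_sum]
    rw [hwc, smul_smul, mul_inv_cancel₀ hm2, one_smul]
  have hex : ∃ y₀ ∈ t, 1 ≤ w' y₀ := by
    by_contra hcon
    push_neg at hcon
    have hle : ∑ y ∈ t, w' y ≤ (t.card : ℝ) := by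
      calc ∑ y ∈ t, w' y ≤ ∑ y ∈ t, 1 := Finset.sum_le_sum (fun y hy => (hcon y hy).le)
        _ = (t.card : ℝ) := by simp
    rw [hw'sum] at hle
    have hcard : (t.card : ℝ) ≤ (m : ℝ) + 1 := by
      have h1 : t.card ≤ A.card := Finset.card_image_le
      have : t.card ≤ m + 1 := le_trans h1 hm
      exact_mod_cast this
    linarith
  obtain ⟨y₀, hy₀t, hy₀⟩ := hex
  obtain ⟨a, ha, hay₀⟩ := Finset.mem_image.mp hy₀t
  refine ⟨a, ha, ?_⟩
  rw [latticeEmb_sub, hay₀, Set.mem_smul_set_iff_inv_smul_mem₀ hm1]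
  set u : (Fin n → ℝ) → ℝ := fun y => (w' y - if y = y₀ then 1 else 0) / ((m : ℝ) + 1) with hu
  have hu0 : ∀ y ∈ t, 0 ≤ u y := by
    intro y hy
    rw [hu]
    by_cases hyy : y = y₀
    · simp only [hyy, if_pos rfl]
      have : (0:ℝ) ≤ w' y₀ - 1 := by linarith
      positivity
    · simp only [if_neg hyy, sub_zero]
      have := hw'0 y hy
      positivity
  have husum : ∑ y ∈ t, u y = 1 := by
    simp only [hu, div_eq_inv_mul, ← Finset.mul_sum]
    rw [Finset.sum_sub_distrib, hw'sum, Finset.sum_ite_eq' t y₀ (fun _ => (1:ℝ)), if_pos hy₀t]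
    field_simp
    ring
  have husum' : ∑ y ∈ t, u y • y = ((m:ℝ)+1)⁻¹ • (latticeEmb n z - y₀) := by
    have heach : ∀ y, u y • y = ((m:ℝ)+1)⁻¹ • (w' y • y)
        - ((m:ℝ)+1)⁻¹ • ((if y = y₀ then (1:ℝ) else 0) • y) := by
      intro y
      simp only [hu, div_eq_inv_mul, mul_smul, sub_smul, smul_sub]
    simp only [heach]
    rw [Finset.sum_sub_distrib, ← Finset.smul_sum, ← Finset.smul_sum, hw'c, ← smul_sub]
    congr 1
    simp only [ite_smul, one_smul, zero_smul]
    simp [Finset.sum_ite_eq', hy₀t]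
  have hcm : t.centerMass u id ∈ convexHull ℝ ↑t :=
    t.centerMass_mem_convexHull hu0 (by rw [husum]; norm_num) (fun y hy => Finset.mem_coe.mpr hy)
  rw [Finset.centerMass_eq_of_sum_1 _ _ husum] at hcm
  simp only [id_eq] at hcm
  rwa [husum'] at hcm

theorem analogous_iff_newtonPolytope_eq (n : ℕ) (K₀ : Set (Finset (Fin n → ℤ)))
    (op : Finset (Fin n → ℤ) → Finset (Fin n → ℤ) → Finset (Fin n → ℤ))
    (hne : ∀ A ∈ K₀, A.Nonempty)
    (hclosed : ∀ A ∈ K₀, ∀ B ∈ K₀, op A B ∈ K₀)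
    (hcomm : ∀ A ∈ K₀, ∀ B ∈ K₀, op A B = op B A)
    (hassoc : ∀ A ∈ K₀, ∀ B ∈ K₀, ∀ C ∈ K₀, op (op A B) C = op A (op B C))
    (h1 : ∀ A ∈ K₀, ∀ A' : Finset (Fin n → ℤ),
      (↑A' : Set (Fin n → ℤ)) = {k | latticeEmb n k ∈ newtonPolytope n A} → A' ∈ K₀)
    (h2 : ∀ A ∈ K₀, ∀ B ∈ K₀, A + B ⊆ op A B)
    (h3 : ∀ A ∈ K₀, ∀ B ∈ K₀, newtonPolytope n (op A B) = newtonPolytope n (A + B))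
    (A : Finset (Fin n → ℤ)) (hA : A ∈ K₀) (B : Finset (Fin n → ℤ)) (hB : B ∈ K₀) :
    (∃ C ∈ K₀, op A C = op B C) ↔ newtonPolytope n A = newtonPolytope n B := by
  constructor
  · rintro ⟨C, hC, hopeq⟩
    have heq : newtonPolytope n A + newtonPolytope n C
        = newtonPolytope n B + newtonPolytope n C := by
      rw [← np_add, ← np_add, ← h3 A hA C hC, ← h3 B hB C hC, hopeq]
    obtain ⟨c0, hc0⟩ := hne C hC
    have hCne : (newtonPolytope n C).Nonempty := ⟨_, mem_np_of_mem n C hc0⟩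
    have hCb := (isBounded_iff_forall_norm_le).mp (np_compact n C).isBounded
    apply subset_antisymm
    · exact subset_of_add_subset (np_convex n B) (np_compact n B).isClosed hCne hCb heq.le
    · exact subset_of_add_subset (np_convex n A) (np_compact n A).isClosed hCne hCb heq.ge
  · intro hΔeq
    obtain ⟨S, hS⟩ := exists_latticeFinset n A
    have hSK : S ∈ K₀ := h1 A hA S hS
    have hSΔ : newtonPolytope n S = newtonPolytope n A := np_latt n A S hS
    set k := A.card + B.card with hk
    set Y : ℕ → Finset (Fin n → ℤ) := fun j => Nat.rec S (fun _ X => op X S) j with hY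
    have hYK : ∀ j, Y j ∈ K₀ := by
      intro j
      induction j with
      | zero => exact hSK
      | succ j ih => exact hclosed _ ih _ hSK
    have hYΔ : ∀ j, newtonPolytope n (Y j) = ((j : ℝ) + 1) • newtonPolytope n A := by
      intro j
      induction j with
      | zero => simp [hY, hSΔ]
      | succ j ih =>
        have : Y (j+1) = op (Y j) S := rfl
        rw [this, h3 _ (hYK j) _ hSK, np_add, ih, hSΔ]
        have hc := (np_convex n A).add_smul (p := (j:ℝ)+1) (q := 1) (by positivity) zero_le_one
        rw [one_smul] at hc
        rw [← hc]
        congr 1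
        push_cast
        ring
    obtain ⟨Z, hZ⟩ := exists_latticeFinset n (Y k)
    have hZK : Z ∈ K₀ := h1 (Y k) (hYK k) Z hZ
    have hZΔ : newtonPolytope n Z = ((k:ℝ)+1) • newtonPolytope n A :=
      (np_latt _ _ _ hZ).trans (hYΔ k)
    have hZset : (↑Z : Set (Fin n → ℤ))
        = {w | latticeEmb n w ∈ ((k:ℝ)+1) • newtonPolytope n A} := by
      rw [hZ]
      ext w
      simp only [Set.mem_setOf_eq, hYΔ k]
    have main : ∀ X, X ∈ K₀ → newtonPolytope n X = newtonPolytope n A → X.card ≤ k + 1 →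
        (↑(op X Z) : Set (Fin n → ℤ))
          = {z | latticeEmb n z ∈ ((k:ℝ)+2) • newtonPolytope n A} := by
      intro X hX hXΔ hXc
      have hsum : newtonPolytope n A + ((k:ℝ)+1) • newtonPolytope n A
          = ((k:ℝ)+2) • newtonPolytope n A := by
        have hc := (np_convex n A).add_smul (p := 1) (q := (k:ℝ)+1) zero_le_one (by positivity)
        rw [one_smul] at hc
        rw [← hc]
        congr 1
        ring
      apply subset_antisymm
      · intro x hx
        have hmem : latticeEmb n x ∈ newtonPolytope n (op X Z) := mem_np_of_mem _ _ hx
        rw [h3 X hX Z hZK, np_add, hXΔ, hZΔ, hsum] at hmem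
        exact hmem
      · intro z hz
        have hz' : latticeEmb n z ∈ ((k:ℝ)+2) • newtonPolytope n X := by
          rw [hXΔ]; exact hz
        obtain ⟨a, ha, hza⟩ := key_step n X k hXc hz'
        rw [hXΔ] at hza
        have hzaZ : z - a ∈ Z := by
          rw [← Finset.mem_coe, hZset]
          exact hza
        have hzXZ : z ∈ X + Z := by
          rw [Finset.mem_add]
          exact ⟨a, ha, z - a, hzaZ, by abel⟩
        exact h2 X hX Z hZK hzXZ
    refine ⟨Z, hZK, Finset.coe_injective ?_⟩
    rw [main A hA rfl (by omega), main B hB hΔeq.symm (by omega)]
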